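/- Let β₁ = (1,0), β₂ = (−1/2, √3/2), β₃ = (−1/2, −√3/2) ∈ ℝ², and for p ∈ ℤ define T_p : ℝ² → ℂ by T_p(x) = Σ_{k=1}^{3} exp(i p (βₖ·x)). Then for all integers p and q, Δ(T_p T_{−q} − T_{p−q}) = −(p² + q² + pq)(T_p T_{−q} − T_{p−q}), where Δ is the Euclidean Laplacian on ℝ² applied to real and imaginary parts. -/

import Mathlib

noncomputable section

/-- Partial derivative in the first coordinate of a function `ℝ × ℝ → ℂ`. -/
def pd1 (f : ℝ × ℝ → ℂ) (x : ℝ × ℝ) : ℂ := deriv (fun t => f (t, x.2)) x.1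

/-- Partial derivative in the second coordinate of a function `ℝ × ℝ → ℂ`. -/
def pd2 (f : ℝ × ℝ → ℂ) (x : ℝ × ℝ) : ℂ := deriv (fun t => f (x.1, t)) x.2

/-- Euclidean Laplacian of a function `ℝ × ℝ → ℂ` (acting on real and imaginary parts). -/
def lap (f : ℝ × ℝ → ℂ) (x : ℝ × ℝ) : ℂ := pd1 (pd1 f) x + pd2 (pd2 f) x

/-- The three cube roots of unity viewed as unit vectors of `ℝ²`. -/
def βvec : Fin 3 → ℝ × ℝ :=
  ![(1, 0), (-(1/2), Real.sqrt 3 / 2), (-(1/2), -(Real.sqrt 3) / 2)]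

def E (a b : ℝ) (y : ℝ × ℝ) : ℂ :=
  Complex.exp (Complex.I * ((a : ℂ) * y.1 + (b : ℂ) * y.2))

lemma hasDerivAt_E1 (a b c : ℝ) (t : ℝ) :
    HasDerivAt (fun s : ℝ => E a b (s, c)) (Complex.I * a * E a b (t, c)) t := by
  have h : HasDerivAt (fun z : ℂ => Complex.exp (Complex.I * ((a:ℂ) * z + (b:ℂ)*(c:ℂ))))
      (Complex.exp (Complex.I * ((a:ℂ)*(t:ℂ) + (b:ℂ)*(c:ℂ))) * (Complex.I * ((a:ℂ)*1))) (t:ℂ) :=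
    HasDerivAt.cexp ((((hasDerivAt_id (t:ℂ)).const_mul (a:ℂ)).add_const ((b:ℂ)*(c:ℂ))).const_mul Complex.I)
  have h2 := h.comp_ofReal
  convert h2 using 1
  all_goals simp only [E]
  ring_nf

lemma hasDerivAt_E2 (a b c : ℝ) (t : ℝ) :
    HasDerivAt (fun s : ℝ => E a b (c, s)) (Complex.I * b * E a b (c, t)) t := by
  have h : HasDerivAt (fun z : ℂ => Complex.exp (Complex.I * ((a:ℂ)*(c:ℂ) + (b:ℂ) * z)))
      (Complex.exp (Complex.I * ((a:ℂ)*(c:ℂ) + (b:ℂ)*(t:ℂ))) * (Complex.I * ((b:ℂ)*1))) (t:ℂ) :=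
    HasDerivAt.cexp (((((hasDerivAt_id (t:ℂ)).const_mul (b:ℂ))).const_add ((a:ℂ)*(c:ℂ))).const_mul Complex.I)
  have h2 := h.comp_ofReal
  convert h2 using 1
  all_goals simp only [E]
  ring_nf

lemma pd1_sum {ι : Type*} (s : Finset ι) (c : ι → ℂ) (a b : ι → ℝ) :
    pd1 (fun y => ∑ i ∈ s, c i * E (a i) (b i) y)
      = fun x => ∑ i ∈ s, (c i * (Complex.I * a i)) * E (a i) (b i) x := by
  funext x
  have h : HasDerivAt (fun t : ℝ => ∑ i ∈ s, c i * E (a i) (b i) (t, x.2))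
      (∑ i ∈ s, c i * (Complex.I * a i * E (a i) (b i) (x.1, x.2))) x.1 :=
    HasDerivAt.fun_sum fun i _ => (hasDerivAt_E1 (a i) (b i) x.2 x.1).const_mul (c i)
  rw [pd1, h.deriv]
  exact Finset.sum_congr rfl fun i _ => by ring

lemma pd2_sum {ι : Type*} (s : Finset ι) (c : ι → ℂ) (a b : ι → ℝ) :
    pd2 (fun y => ∑ i ∈ s, c i * E (a i) (b i) y)
      = fun x => ∑ i ∈ s, (c i * (Complex.I * b i)) * E (a i) (b i) x := by
  funext x
  have h : HasDerivAt (fun t : ℝ => ∑ i ∈ s, c i * E (a i) (b i) (x.1, t))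
      (∑ i ∈ s, c i * (Complex.I * b i * E (a i) (b i) (x.1, x.2))) x.2 :=
    HasDerivAt.fun_sum fun i _ => (hasDerivAt_E2 (a i) (b i) x.1 x.2).const_mul (c i)
  rw [pd2, h.deriv]
  exact Finset.sum_congr rfl fun i _ => by ring

lemma lap_sum {ι : Type*} (s : Finset ι) (c : ι → ℂ) (a b : ι → ℝ) (x : ℝ × ℝ) :
    lap (fun y => ∑ i ∈ s, c i * E (a i) (b i) y) x
      = ∑ i ∈ s, (-(((a i : ℂ))^2 + ((b i : ℂ))^2)) * (c i * E (a i) (b i) x) := by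
  rw [lap, pd1_sum, pd1_sum, pd2_sum, pd2_sum, ← Finset.sum_add_distrib]
  refine Finset.sum_congr rfl fun i _ => ?_
  have hI : (Complex.I)^2 = -1 := Complex.I_sq
  ring_nf
  rw [hI]
  ring

theorem stmt_9 (T : ℤ → ℝ × ℝ → ℂ)
    (hT : ∀ (p : ℤ) (x : ℝ × ℝ), T p x = ∑ k : Fin 3,
      Complex.exp (Complex.I * (p : ℂ) * (((βvec k).1 * x.1 + (βvec k).2 * x.2 : ℝ) : ℂ))) :
    ∀ (p q : ℤ) (x : ℝ × ℝ),
      lap (fun y => T p y * T (-q) y - T (p - q) y) x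
        = -(((p : ℂ)) ^ 2 + (q : ℂ) ^ 2 + (p : ℂ) * q) * (T p x * T (-q) x - T (p - q) x) := by
  intro p q x
  have h3 : Real.sqrt 3 * Real.sqrt 3 = 3 := Real.mul_self_sqrt (by norm_num)
  set aa : Fin 6 → ℝ := ![(p:ℝ) + q/2, (p:ℝ) + q/2, -(p:ℝ)/2 - q, -(p:ℝ)/2 + q/2,
    -(p:ℝ)/2 - q, -(p:ℝ)/2 + q/2] with haa
  set bb : Fin 6 → ℝ := ![-(q:ℝ)*(Real.sqrt 3/2), (q:ℝ)*(Real.sqrt 3/2), (p:ℝ)*(Real.sqrt 3/2),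
    ((p:ℝ)+q)*(Real.sqrt 3/2), -((p:ℝ)*(Real.sqrt 3/2)), -(((p:ℝ)+q)*(Real.sqrt 3/2))] with hbb
  have key : ∀ y : ℝ × ℝ, T p y * T (-q) y - T (p - q) y
      = ∑ i : Fin 6, (1:ℂ) * E (aa i) (bb i) y := by
    intro y
    rw [hT p, hT (-q), hT (p - q)]
    simp only [Fin.sum_univ_three, Fin.sum_univ_six, haa, hbb, βvec, E,
      Matrix.cons_val_zero, Matrix.cons_val_one, Matrix.head_cons, Matrix.cons_val_two,
      Matrix.cons_val_three, Matrix.cons_val_four, Matrix.tail_cons,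
      show (5:Fin 6) = Fin.succ 4 from rfl, Matrix.cons_val_succ, one_mul]
    push_cast
    ring_nf
    simp only [← Complex.exp_add]
    ring_nf
  have keyf : (fun y => T p y * T (-q) y - T (p - q) y)
      = fun y => ∑ i : Fin 6, (1:ℂ) * E (aa i) (bb i) y := funext key
  rw [keyf, lap_sum, key x, Finset.mul_sum]
  refine Finset.sum_congr rfl fun i _ => ?_
  have hev : (aa i)^2 + (bb i)^2 = (p:ℝ)^2 + (q:ℝ)^2 + (p:ℝ)*(q:ℝ) := by
    fin_cases i <;>
      · simp only [haa, hbb]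
        simp [show (5:Fin 6) = Fin.succ 4 from rfl, Matrix.cons_val_succ]
        nlinarith [h3]
  have hc : ((aa i : ℂ))^2 + ((bb i : ℂ))^2 = (p:ℂ)^2 + (q:ℂ)^2 + (p:ℂ)*(q:ℂ) := by
    have h := congrArg (fun r : ℝ => (r : ℂ)) hev
    push_cast at h
    exact h
  rw [hc]
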